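/- For a finite poset P, the vertices of the order polytope O(P) are exactly the indicator functions of filters of P; that is, a 0-1 valued function f: P → {0,1} lies in O(P) iff its support {x : f(x) = 1} is a filter, and these are exactly the vertices. -/

import Mathlib

/-- The order polytope: order-preserving maps `P → [0,1]`. -/
def orderPolytope (P : Type*) [PartialOrder P] : Set (P → ℝ) :=
  {f | (∀ z, f z ∈ Set.Icc (0:ℝ) 1) ∧ Monotone f}

lemma orderPolytope_pert_mem {P : Type*} [PartialOrder P] (f : P → ℝ)
    (hf : f ∈ orderPolytope P) (t : ℝ) (ε : ℝ)
    (hε1 : |ε| ≤ t) (hε2 : |ε| ≤ 1 - t)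
    (hε3 : ∀ a b : P, f a < f b → |ε| ≤ f b - f a) :
    (fun w => f w + if f w = t then ε else 0) ∈ orderPolytope P := by
  obtain ⟨hεa, hεb⟩ := abs_le.mp hε1
  obtain ⟨hεc, hεd⟩ := abs_le.mp hε2
  constructor
  · intro w
    dsimp only
    by_cases h : f w = t
    · rw [if_pos h, h, Set.mem_Icc]
      constructor <;> linarith
    · simpa [h] using hf.1 w
  · intro a b hab
    have hm := hf.2 hab
    dsimp only
    by_cases ha : f a = t <;> by_cases hb : f b = t
    · rw [if_pos ha, if_pos hb]; linarith
    · have hlt : f a < f b := lt_of_le_of_ne hm (by rw [ha]; exact fun h => hb h.symm)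
      obtain ⟨h1, h2⟩ := abs_le.mp (hε3 a b hlt)
      rw [if_pos ha, if_neg hb]; linarith
    · have hlt : f a < f b := lt_of_le_of_ne hm (fun h => ha (h.trans hb))
      obtain ⟨h1, h2⟩ := abs_le.mp (hε3 a b hlt)
      rw [if_neg ha, if_pos hb]; linarith
    · rw [if_neg ha, if_neg hb]; linarith

theorem orderPolytope_vertices {P : Type*} [PartialOrder P] [Fintype P] :
    (∀ f : P → ℝ, (∀ z, f z = 0 ∨ f z = 1) →
      (f ∈ orderPolytope P ↔ IsUpperSet {z | f z = 1})) ∧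
    (∀ f : P → ℝ, f ∈ Set.extremePoints ℝ (orderPolytope P) ↔
      ((∀ z, f z = 0 ∨ f z = 1) ∧ IsUpperSet {z | f z = 1})) := by
  have part1 : ∀ f : P → ℝ, (∀ z, f z = 0 ∨ f z = 1) →
      (f ∈ orderPolytope P ↔ IsUpperSet {z | f z = 1}) := by
    intro f hf
    constructor
    · intro hmem a b hab ha
      rcases hf b with h0 | h1
      · have := hmem.2 hab
        simp only [Set.mem_setOf_eq] at ha
        rw [ha, h0] at this; linarith
      · exact h1
    · intro hup
      refine ⟨fun z => ?_, fun a b hab => ?_⟩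
      · rcases hf z with h | h <;> simp [h]
      · rcases hf a with ha | ha
        · rcases hf b with hb | hb <;> simp [ha, hb]
        · have hb : f b = 1 := hup hab ha
          rw [ha, hb]
  refine ⟨part1, fun f => ⟨fun hext => ?_, fun ⟨h01, hup⟩ => ?_⟩⟩
  · -- extreme → 0-1 valued & upper set
    obtain ⟨hmem, hx⟩ := hext
    have h01 : ∀ z, f z = 0 ∨ f z = 1 := by
      by_contra h
      push_neg at h
      obtain ⟨z, hz0, hz1⟩ := h
      have hz01 := hmem.1 z
      have ht0 : 0 < f z := lt_of_le_of_ne hz01.1 (Ne.symm hz0)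
      have ht1 : f z < 1 := lt_of_le_of_ne hz01.2 hz1
      -- choose ε
      set S : Finset ℝ := insert (f z) (insert (1 - f z)
        (((Finset.univ ×ˢ Finset.univ : Finset (P × P)).filter
          (fun p => f p.1 < f p.2)).image (fun p => f p.2 - f p.1))) with hS
      have hSne : S.Nonempty := ⟨f z, by simp [hS]⟩
      set ε : ℝ := S.min' hSne with hε
      have hεpos : 0 < ε := by
        apply (Finset.lt_min'_iff S hSne).mpr
        intro y hy
        simp only [hS, Finset.mem_insert, Finset.mem_image, Finset.mem_filter] at hy
        rcases hy with rfl | rfl | ⟨p, ⟨_, hp⟩, rfl⟩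
        · exact ht0
        · linarith
        · linarith
      have hεmem : ∀ y ∈ S, ε ≤ y := fun y hy => Finset.min'_le S y hy
      have habs : |ε| = ε := abs_of_pos hεpos
      have hε1 : |ε| ≤ f z := by rw [habs]; exact hεmem _ (by simp [hS])
      have hε2 : |ε| ≤ 1 - f z := by rw [habs]; exact hεmem _ (by simp [hS])
      have hε3 : ∀ a b : P, f a < f b → |ε| ≤ f b - f a := by
        intro a b hab
        rw [habs]
        apply hεmem
        simp only [hS, Finset.mem_insert, Finset.mem_image, Finset.mem_filter]
        exact Or.inr (Or.inr ⟨(a, b), ⟨by simp, hab⟩, rfl⟩)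
      have hneg : ∀ a b : P, f a < f b → |(-ε)| ≤ f b - f a := by
        intro a b hab; rw [abs_neg]; exact hε3 a b hab
      set g₁ : P → ℝ := fun w => f w + if f w = f z then ε else 0 with hg₁
      set g₂ : P → ℝ := fun w => f w + if f w = f z then (-ε) else 0 with hg₂
      have hm1 : g₁ ∈ orderPolytope P :=
        orderPolytope_pert_mem f hmem (f z) ε hε1 hε2 hε3
      have hm2 : g₂ ∈ orderPolytope P :=
        orderPolytope_pert_mem f hmem (f z) (-ε)
          (by rw [abs_neg]; exact hε1) (by rw [abs_neg]; exact hε2) hneg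
      have hseg : f ∈ openSegment ℝ g₁ g₂ := by
        refine ⟨1/2, 1/2, by norm_num, by norm_num, by norm_num, ?_⟩
        funext w
        simp only [hg₁, hg₂, Pi.add_apply, Pi.smul_apply, smul_eq_mul]
        by_cases h : f w = f z <;> simp [h] <;> ring
      have := hx hm1 hm2 hseg
      have hzz : g₁ z = f z := by rw [this]
      have : g₁ z = f z + ε := by simp [hg₁]
      rw [this] at hzz
      linarith
    exact ⟨h01, (part1 f h01).mp hmem⟩
  · -- 0-1 valued & upper set → extreme
    have hmem : f ∈ orderPolytope P := (part1 f h01).mpr hup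
    refine ⟨hmem, fun x hx y hy hseg => ?_⟩
    obtain ⟨a, b, ha, hb, hab, hsum⟩ := hseg
    have key : ∀ z, x z = f z ∧ y z = f z := by
      intro z
      have hxz := hx.1 z
      have hyz := hy.1 z
      have heq : a * x z + b * y z = f z := by
        have := congrFun hsum z
        simpa using this
      rcases h01 z with h | h
      · rw [h] at heq ⊢
        constructor <;> nlinarith [hxz.1, hxz.2, hyz.1, hyz.2]
      · rw [h] at heq ⊢
        constructor <;> nlinarith [hxz.1, hxz.2, hyz.1, hyz.2]
    exact funext fun z => (key z).1
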